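/- Let C₃ denote the cyclic group of order 3 and C₂ ⊕ C₂ the Klein four-group. Then the systems of sets of lengths satisfy L(B(C₃)) = L(B(C₂ ⊕ C₂)) = { y + 2k + [0, k] : y, k ∈ ℕ₀ }, where y + 2k + [0, k] denotes the integer interval { y + 2k, y + 2k + 1, …, y + 3k }. -/

import Mathlib

open scoped Classical ENNReal

/-- An atom of a reduced additive monoid: a nonzero element which is not the sum of
two nonzero elements. -/
def IsAddAtom {N : Type*} [AddMonoid N] (u : N) : Prop :=
  u ≠ 0 ∧ ∀ v w : N, u = v + w → v = 0 ∨ w = 0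

/-- The set of lengths of `a` in a reduced additive monoid. -/
def addLengths {N : Type*} [AddMonoid N] (a : N) : Set ℕ :=
  {k | ∃ l : List N, l.length = k ∧ (∀ x ∈ l, IsAddAtom x) ∧ l.sum = a}

/-- An atom of the (reduced) submonoid `S`: a nonzero element of `S` which is not the
sum of two nonzero elements of `S`. -/
def IsAtomIn {N : Type*} [AddCommMonoid N] (S : Set N) (u : N) : Prop :=
  u ∈ S ∧ u ≠ 0 ∧ ∀ v ∈ S, ∀ w ∈ S, u = v + w → v = 0 ∨ w = 0

/-- The set of lengths of `a` relative to the submonoid `S`. -/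
def lengthsIn {N : Type*} [AddCommMonoid N] (S : Set N) (a : N) : Set ℕ :=
  {k | ∃ l : List N, l.length = k ∧ (∀ x ∈ l, IsAtomIn S x) ∧ l.sum = a}

/-- The set of distances of a set `L ⊆ ℕ`. -/
def distances (L : Set ℕ) : Set ℕ :=
  {d | 0 < d ∧ ∃ k ∈ L, k + d ∈ L ∧ ∀ m ∈ L, k ≤ m → m ≤ k + d → m = k ∨ m = k + d}

/-- The set of distances of the submonoid `S`. -/
def DeltaIn {N : Type*} [AddCommMonoid N] (S : Set N) : Set ℕ :=
  ⋃ a ∈ S, distances (lengthsIn S a)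

/-- The monoid of zero-sum sequences over `G`, realized as the set of multisets
over `G` with sum zero. -/
def ZS (G : Type*) [AddCommGroup G] : Set (Multiset G) := {s | s.sum = 0}

/-- The Davenport constant: the maximal length of an atom of `B(G)`. -/
noncomputable def davenport (G : Type*) [AddCommGroup G] : ℕ :=
  sSup {n : ℕ | ∃ s : Multiset G, IsAtomIn (ZS G) s ∧ Multiset.card s = n}

/-- The union `U_k` of sets of lengths relative to `S`. -/
def UIn {N : Type*} [AddCommMonoid N] (S : Set N) (k : ℕ) : Set ℕ :=
  {ℓ | ∃ l1 l2 : List N, l1.length = k ∧ l2.length = ℓ ∧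
      (∀ x ∈ l1, IsAtomIn S x) ∧ (∀ x ∈ l2, IsAtomIn S x) ∧ l1.sum = l2.sum}

/-- `ρ_k = sup U_k`, valued in `ℝ≥0∞`. -/
noncomputable def rhoKIn {N : Type*} [AddCommMonoid N] (S : Set N) (k : ℕ) : ℝ≥0∞ :=
  ⨆ ℓ ∈ UIn S k, (ℓ : ℝ≥0∞)

/-- The elasticity `ρ(L) = sup L / min L` of a set of lengths, with `ρ({0}) = 1`. -/
noncomputable def setElasticity (L : Set ℕ) : ℝ≥0∞ :=
  if L = {0} then 1 else (⨆ n ∈ L, (n : ℝ≥0∞)) / ((sInf L : ℕ) : ℝ≥0∞)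

/-- The elasticity of the submonoid `S`. -/
noncomputable def elasticityIn {N : Type*} [AddCommMonoid N] (S : Set N) : ℝ≥0∞ :=
  ⨆ a ∈ S, setElasticity (lengthsIn S a)

set_option linter.unusedSectionVars false
section helpers
variable {G : Type*} [AddCommGroup G] [DecidableEq G]

lemma atom_zero : IsAtomIn (ZS G) ({0} : Multiset G) := by
  refine ⟨by simp [ZS], by simp, ?_⟩
  intro v hv w hw h
  have hc : Multiset.card v + Multiset.card w = 1 := by
    have := congrArg Multiset.card h.symm
    simpa using this
  have : Multiset.card v = 0 ∨ Multiset.card w = 0 := by omega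
  rcases this with h1 | h1
  · exact Or.inl (Multiset.card_eq_zero.mp h1)
  · exact Or.inr (Multiset.card_eq_zero.mp h1)

lemma atom_small (u : Multiset G) (h0 : u.sum = 0) (hne : u ≠ 0)
    (hc : Multiset.card u ≤ 3) (hz : (0:G) ∉ u) : IsAtomIn (ZS G) u := by
  refine ⟨h0, hne, ?_⟩
  intro v hv w hw h
  by_contra hcon
  push_neg at hcon
  obtain ⟨hv0, hw0⟩ := hcon
  have hcv : 1 ≤ Multiset.card v := Multiset.card_pos.mpr hv0
  have hcw : 1 ≤ Multiset.card w := Multiset.card_pos.mpr hw0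
  have hsum : Multiset.card v + Multiset.card w ≤ 3 := by
    have := congrArg Multiset.card h
    simp [Multiset.card_add] at this
    omega
  have key : ∀ t : Multiset G, t.sum = 0 → Multiset.card t = 1 → t ≤ u → False := by
    intro t ht h1 hle
    obtain ⟨a, rfl⟩ := Multiset.card_eq_one.mp h1
    have : a = 0 := by simpa using ht
    subst this
    exact hz (Multiset.mem_of_le hle (Multiset.mem_singleton_self 0))
  rcases (by omega : Multiset.card v = 1 ∨ Multiset.card w = 1) with h1 | h1
  · exact key v hv h1 (by rw [h]; exact Multiset.le_add_right _ _)
  · exact key w hw h1 (by rw [h]; exact Multiset.le_add_left _ _)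

lemma eq_of_le_atom {u v : Multiset G} (hu : IsAtomIn (ZS G) u) (hle : v ≤ u)
    (hvs : v.sum = 0) (hvne : v ≠ 0) : u = v := by
  obtain ⟨hus, hune, hsplit⟩ := hu
  have hdec : v + (u - v) = u := add_tsub_cancel_of_le hle
  have hws : (u - v).sum = 0 := by
    have := congrArg Multiset.sum hdec
    rw [Multiset.sum_add] at this
    have hus' : u.sum = 0 := hus
    rw [hvs, zero_add] at this
    rw [this, hus']
  rcases hsplit v hvs (u - v) hws hdec.symm with h | h
  · exact absurd h hvne
  · rw [← hdec, h, add_zero]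

end helpers

/-! ### C₃ -/

def e3 (x y z : ℕ) : Multiset (ZMod 3) := x • {0} + y • {1} + z • {2}

lemma zmod3_cases : ∀ a : ZMod 3, a = 0 ∨ a = 1 ∨ a = 2 := by decide

lemma count_e3 (x y z : ℕ) (a : ZMod 3) :
    (e3 x y z).count a = x * ({0} : Multiset (ZMod 3)).count a
      + y * ({1} : Multiset (ZMod 3)).count a + z * ({2} : Multiset (ZMod 3)).count a := by
  simp [e3, Multiset.count_nsmul]

lemma count_e3_0 (x y z : ℕ) : (e3 x y z).count 0 = x := by
  rw [count_e3]
  norm_num [Multiset.count_singleton, show ¬(0 : ZMod 3) = 1 by decide, show ¬(0 : ZMod 3) = 2 by decide]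
lemma count_e3_1 (x y z : ℕ) : (e3 x y z).count 1 = y := by
  rw [count_e3]
  norm_num [Multiset.count_singleton, show ¬(1 : ZMod 3) = 0 by decide, show ¬(1 : ZMod 3) = 2 by decide]
lemma count_e3_2 (x y z : ℕ) : (e3 x y z).count 2 = z := by
  rw [count_e3]
  norm_num [Multiset.count_singleton, show ¬(2 : ZMod 3) = 0 by decide, show ¬(2 : ZMod 3) = 1 by decide]

lemma e3_repr (s : Multiset (ZMod 3)) : s = e3 (s.count 0) (s.count 1) (s.count 2) := by
  ext a
  rcases zmod3_cases a with rfl | rfl | rfl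
  · rw [count_e3_0]
  · rw [count_e3_1]
  · rw [count_e3_2]

lemma sum_e3 (x y z : ℕ) : (e3 x y z).sum = (y : ZMod 3) + 2 * (z : ZMod 3) := by
  have h1 : (({0} : Multiset (ZMod 3))).sum = 0 := by decide
  have h2 : (({1} : Multiset (ZMod 3))).sum = 1 := by decide
  have h3 : (({2} : Multiset (ZMod 3))).sum = 2 := by decide
  rw [e3, Multiset.sum_add, Multiset.sum_add, Multiset.sum_nsmul, Multiset.sum_nsmul,
    Multiset.sum_nsmul, h1, h2, h3]
  simp [nsmul_eq_mul]
  ring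

lemma mem_ZS3 (x y z : ℕ) : e3 x y z ∈ ZS (ZMod 3) ↔ (y + 2*z) % 3 = 0 := by
  show (e3 x y z).sum = 0 ↔ _
  rw [sum_e3]
  have : (y : ZMod 3) + 2 * z = ((y + 2*z : ℕ) : ZMod 3) := by push_cast; ring
  rw [this, ZMod.natCast_eq_zero_iff]
  omega

lemma atoms3 (u : Multiset (ZMod 3)) :
    IsAtomIn (ZS (ZMod 3)) u ↔
      u = {0} ∨ u = ({1,2} : Multiset (ZMod 3)) ∨ u = {1,1,1} ∨ u = {2,2,2} := by
  constructor
  · intro hu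
    have hrep := e3_repr u
    have hmem : e3 (u.count 0) (u.count 1) (u.count 2) ∈ ZS (ZMod 3) := by
      rw [← hrep]; exact hu.1
    have hsum : (u.count 1 + 2 * u.count 2) % 3 = 0 := (mem_ZS3 _ _ _).mp hmem
    by_cases hx : 1 ≤ u.count 0
    · left
      refine eq_of_le_atom hu ?_ (by decide) (by decide)
      rw [Multiset.le_iff_count]
      intro a
      rcases zmod3_cases a with rfl | rfl | rfl
      · rw [show Multiset.count (0:ZMod 3) ({0} : Multiset (ZMod 3)) = 1 from by decide]; omega
      · rw [show Multiset.count (1:ZMod 3) ({0} : Multiset (ZMod 3)) = 0 from by decide]; omega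
      · rw [show Multiset.count (2:ZMod 3) ({0} : Multiset (ZMod 3)) = 0 from by decide]; omega
    · by_cases hy : 1 ≤ u.count 1
      · by_cases hz : 1 ≤ u.count 2
        · right; left
          refine eq_of_le_atom hu ?_ (by decide) (by decide)
          rw [Multiset.le_iff_count]
          intro a
          rcases zmod3_cases a with rfl | rfl | rfl
          · rw [show Multiset.count (0:ZMod 3) ({1,2} : Multiset (ZMod 3)) = 0 from by decide]; omega
          · rw [show Multiset.count (1:ZMod 3) ({1,2} : Multiset (ZMod 3)) = 1 from by decide]; omega
          · rw [show Multiset.count (2:ZMod 3) ({1,2} : Multiset (ZMod 3)) = 1 from by decide]; omega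
        · right; right; left
          refine eq_of_le_atom hu ?_ (by decide) (by decide)
          rw [Multiset.le_iff_count]
          intro a
          rcases zmod3_cases a with rfl | rfl | rfl
          · rw [show Multiset.count (0:ZMod 3) ({1,1,1} : Multiset (ZMod 3)) = 0 from by decide]; omega
          · rw [show Multiset.count (1:ZMod 3) ({1,1,1} : Multiset (ZMod 3)) = 3 from by decide]; omega
          · rw [show Multiset.count (2:ZMod 3) ({1,1,1} : Multiset (ZMod 3)) = 0 from by decide]; omega
      · by_cases hz : 1 ≤ u.count 2
        · right; right; right
          refine eq_of_le_atom hu ?_ (by decide) (by decide)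
          rw [Multiset.le_iff_count]
          intro a
          rcases zmod3_cases a with rfl | rfl | rfl
          · rw [show Multiset.count (0:ZMod 3) ({2,2,2} : Multiset (ZMod 3)) = 0 from by decide]; omega
          · rw [show Multiset.count (1:ZMod 3) ({2,2,2} : Multiset (ZMod 3)) = 0 from by decide]; omega
          · rw [show Multiset.count (2:ZMod 3) ({2,2,2} : Multiset (ZMod 3)) = 3 from by decide]; omega
        · exfalso
          apply hu.2.1
          rw [hrep, (by omega : u.count 0 = 0), (by omega : u.count 1 = 0),
            (by omega : u.count 2 = 0)]
          simp [e3]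
  · rintro (rfl | rfl | rfl | rfl)
    · exact atom_zero
    · exact atom_small _ (by decide) (by decide) (by decide) (by decide)
    · exact atom_small _ (by decide) (by decide) (by decide) (by decide)
    · exact atom_small _ (by decide) (by decide) (by decide) (by decide)

lemma combo_eq3 (a b c d : ℕ) :
    a • ({0} : Multiset (ZMod 3)) + b • ({1,2} : Multiset (ZMod 3))
      + c • ({1,1,1} : Multiset (ZMod 3)) + d • ({2,2,2} : Multiset (ZMod 3))
      = e3 a (b + 3*c) (b + 3*d) := by
  ext g
  simp only [Multiset.count_add, Multiset.count_nsmul]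
  rcases zmod3_cases g with rfl | rfl | rfl
  · rw [count_e3_0,
      show Multiset.count (0:ZMod 3) ({0} : Multiset (ZMod 3)) = 1 from by decide,
      show Multiset.count (0:ZMod 3) ({1,2} : Multiset (ZMod 3)) = 0 from by decide,
      show Multiset.count (0:ZMod 3) ({1,1,1} : Multiset (ZMod 3)) = 0 from by decide,
      show Multiset.count (0:ZMod 3) ({2,2,2} : Multiset (ZMod 3)) = 0 from by decide]
    ring
  · rw [count_e3_1,
      show Multiset.count (1:ZMod 3) ({0} : Multiset (ZMod 3)) = 0 from by decide,
      show Multiset.count (1:ZMod 3) ({1,2} : Multiset (ZMod 3)) = 1 from by decide,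
      show Multiset.count (1:ZMod 3) ({1,1,1} : Multiset (ZMod 3)) = 3 from by decide,
      show Multiset.count (1:ZMod 3) ({2,2,2} : Multiset (ZMod 3)) = 0 from by decide]
    ring
  · rw [count_e3_2,
      show Multiset.count (2:ZMod 3) ({0} : Multiset (ZMod 3)) = 0 from by decide,
      show Multiset.count (2:ZMod 3) ({1,2} : Multiset (ZMod 3)) = 1 from by decide,
      show Multiset.count (2:ZMod 3) ({1,1,1} : Multiset (ZMod 3)) = 0 from by decide,
      show Multiset.count (2:ZMod 3) ({2,2,2} : Multiset (ZMod 3)) = 3 from by decide]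
    ring

lemma list_sum_decomp3 (l : List (Multiset (ZMod 3)))
    (h : ∀ x ∈ l, x = {0} ∨ x = ({1,2} : Multiset (ZMod 3)) ∨ x = {1,1,1} ∨ x = {2,2,2}) :
    ∃ a b c d : ℕ, l.length = a+b+c+d ∧
      l.sum = a • ({0} : Multiset (ZMod 3)) + b • ({1,2} : Multiset (ZMod 3))
        + c • ({1,1,1} : Multiset (ZMod 3)) + d • ({2,2,2} : Multiset (ZMod 3)) := by
  induction l with
  | nil => exact ⟨0,0,0,0, by simp, by simp⟩
  | cons head tail ih =>
    obtain ⟨a,b,c,d,hlen,hsum⟩ := ih (fun x hx => h x (List.mem_cons_of_mem _ hx))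
    rcases h head List.mem_cons_self with rfl | rfl | rfl | rfl
    · exact ⟨a+1,b,c,d, by simp [hlen]; omega,
        by rw [List.sum_cons, hsum, succ_nsmul]; abel⟩
    · exact ⟨a,b+1,c,d, by simp [hlen]; omega,
        by rw [List.sum_cons, hsum, succ_nsmul]; abel⟩
    · exact ⟨a,b,c+1,d, by simp [hlen]; omega,
        by rw [List.sum_cons, hsum, succ_nsmul]; abel⟩
    · exact ⟨a,b,c,d+1, by simp [hlen]; omega,
        by rw [List.sum_cons, hsum, succ_nsmul]; abel⟩

lemma exists_list3 (a b c d : ℕ) :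
    ∃ l : List (Multiset (ZMod 3)), l.length = a+b+c+d ∧
      (∀ x ∈ l, x = {0} ∨ x = ({1,2} : Multiset (ZMod 3)) ∨ x = {1,1,1} ∨ x = {2,2,2}) ∧
      l.sum = a • ({0} : Multiset (ZMod 3)) + b • ({1,2} : Multiset (ZMod 3))
        + c • ({1,1,1} : Multiset (ZMod 3)) + d • ({2,2,2} : Multiset (ZMod 3)) := by
  refine ⟨List.replicate a {0} ++ List.replicate b {1,2} ++ List.replicate c {1,1,1}
    ++ List.replicate d {2,2,2}, by simp; omega, ?_, by simp [List.sum_append, List.sum_replicate, add_assoc]⟩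
  intro m hm
  simp only [List.mem_append, List.mem_replicate] at hm
  rcases hm with ((⟨_, rfl⟩ | ⟨_, rfl⟩) | ⟨_, rfl⟩) | ⟨_, rfl⟩
  · exact Or.inl rfl
  · exact Or.inr (Or.inl rfl)
  · exact Or.inr (Or.inr (Or.inl rfl))
  · exact Or.inr (Or.inr (Or.inr rfl))

lemma lengths3 (x y z : ℕ) :
    lengthsIn (ZS (ZMod 3)) (e3 x y z) =
      {k | ∃ a b c d : ℕ, k = a+b+c+d ∧ x = a ∧ y = b+3*c ∧ z = b+3*d} := by
  ext k
  constructor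
  · rintro ⟨l, hlen, hat, hsum⟩
    obtain ⟨a,b,c,d,hl,hs⟩ := list_sum_decomp3 l (fun m hm => (atoms3 m).mp (hat m hm))
    rw [combo_eq3] at hs
    have he : e3 a (b+3*c) (b+3*d) = e3 x y z := hs ▸ hsum
    have h0 := congrArg (Multiset.count 0) he
    have h1 := congrArg (Multiset.count 1) he
    have h2 := congrArg (Multiset.count 2) he
    rw [count_e3_0, count_e3_0] at h0
    rw [count_e3_1, count_e3_1] at h1
    rw [count_e3_2, count_e3_2] at h2
    exact ⟨a,b,c,d, by omega, h0.symm, h1.symm, h2.symm⟩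
  · rintro ⟨a,b,c,d, hk, hx, hy, hz⟩
    obtain ⟨l, h1, h2, h3⟩ := exists_list3 a b c d
    refine ⟨l, by omega, fun m hm => (atoms3 m).mpr (h2 m hm), ?_⟩
    rw [h3, combo_eq3, ← hx, ← hy, ← hz]

lemma interval3 (x y z : ℕ) (h : (y + 2*z) % 3 = 0) :
    {k | ∃ a b c d : ℕ, k = a+b+c+d ∧ x = a ∧ y = b+3*c ∧ z = b+3*d}
      = Set.Icc (x + (y + z + y % 3)/3) (x + (y + z + min y z)/3) := by
  ext k
  simp only [Set.mem_setOf_eq, Set.mem_Icc]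
  constructor
  · rintro ⟨a,b,c,d, rfl, rfl, rfl, rfl⟩
    constructor <;> [skip; skip] <;> omega
  · rintro ⟨h1, h2⟩
    exact ⟨x, 3*(k-x) - (y+z), (2*y+z)/3 - (k-x), (y+2*z)/3 - (k-x), by omega, rfl, by omega, by omega⟩

lemma fam3 :
    {L : Set ℕ | ∃ s ∈ ZS (ZMod 3), L = lengthsIn (ZS (ZMod 3)) s} =
      {L : Set ℕ | ∃ y k : ℕ, L = Set.Icc (y + 2 * k) (y + 3 * k)} := by
  ext L
  simp only [Set.mem_setOf_eq]
  constructor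
  · rintro ⟨s, hs, rfl⟩
    obtain ⟨x, y, z, h3, rfl⟩ : ∃ x y z : ℕ, (y + 2*z) % 3 = 0 ∧ s = e3 x y z := by
      refine ⟨s.count 0, s.count 1, s.count 2, ?_, e3_repr s⟩
      exact (mem_ZS3 _ _ _).mp (by rw [← e3_repr s]; exact hs)
    rw [lengths3, interval3 x y z h3]
    refine ⟨x + (y + z + y % 3)/3 - 2 * ((min y z - y % 3)/3), (min y z - y % 3)/3, ?_⟩
    have e1 : x + (y + z + y % 3)/3
        = x + (y + z + y % 3)/3 - 2 * ((min y z - y % 3)/3) + 2 * ((min y z - y % 3)/3) := by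
      omega
    have e2 : x + (y + z + min y z)/3
        = x + (y + z + y % 3)/3 - 2 * ((min y z - y % 3)/3) + 3 * ((min y z - y % 3)/3) := by
      omega
    rw [← e1, ← e2]
  · rintro ⟨y, k, rfl⟩
    have hm : (3*k + 2*(3*k)) % 3 = 0 := by omega
    refine ⟨e3 y (3*k) (3*k), (mem_ZS3 y (3*k) (3*k)).mpr hm, ?_⟩
    rw [lengths3, interval3 y (3*k) (3*k) hm]
    have e1 : y + (3*k + 3*k + (3*k) % 3)/3 = y + 2 * k := by omega
    have e2 : y + (3*k + 3*k + min (3*k) (3*k))/3 = y + 3 * k := by omega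
    rw [e1, e2]

/-! ### Klein four group -/

def vA : ZMod 2 × ZMod 2 := (1, 0)
def vB : ZMod 2 × ZMod 2 := (0, 1)
def vC : ZMod 2 × ZMod 2 := (1, 1)

def e4 (w x y z : ℕ) : Multiset (ZMod 2 × ZMod 2) := w • {0} + x • {vA} + y • {vB} + z • {vC}

lemma V_cases : ∀ a : ZMod 2 × ZMod 2, a = 0 ∨ a = vA ∨ a = vB ∨ a = vC := by decide

lemma count_e4 (w x y z : ℕ) (a : ZMod 2 × ZMod 2) :
    (e4 w x y z).count a = w * ({0} : Multiset (ZMod 2 × ZMod 2)).count a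
      + x * ({vA} : Multiset (ZMod 2 × ZMod 2)).count a
      + y * ({vB} : Multiset (ZMod 2 × ZMod 2)).count a
      + z * ({vC} : Multiset (ZMod 2 × ZMod 2)).count a := by
  simp [e4, Multiset.count_nsmul]

lemma count_e4_0 (w x y z : ℕ) : (e4 w x y z).count 0 = w := by
  rw [count_e4,
    show Multiset.count (0 : ZMod 2 × ZMod 2) ({0} : Multiset (ZMod 2 × ZMod 2)) = 1 from by decide,
    show Multiset.count (0 : ZMod 2 × ZMod 2) ({vA} : Multiset (ZMod 2 × ZMod 2)) = 0 from by decide,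
    show Multiset.count (0 : ZMod 2 × ZMod 2) ({vB} : Multiset (ZMod 2 × ZMod 2)) = 0 from by decide,
    show Multiset.count (0 : ZMod 2 × ZMod 2) ({vC} : Multiset (ZMod 2 × ZMod 2)) = 0 from by decide]
  ring
lemma count_e4_A (w x y z : ℕ) : (e4 w x y z).count vA = x := by
  rw [count_e4,
    show Multiset.count vA ({0} : Multiset (ZMod 2 × ZMod 2)) = 0 from by decide,
    show Multiset.count vA ({vA} : Multiset (ZMod 2 × ZMod 2)) = 1 from by decide,
    show Multiset.count vA ({vB} : Multiset (ZMod 2 × ZMod 2)) = 0 from by decide,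
    show Multiset.count vA ({vC} : Multiset (ZMod 2 × ZMod 2)) = 0 from by decide]
  ring
lemma count_e4_B (w x y z : ℕ) : (e4 w x y z).count vB = y := by
  rw [count_e4,
    show Multiset.count vB ({0} : Multiset (ZMod 2 × ZMod 2)) = 0 from by decide,
    show Multiset.count vB ({vA} : Multiset (ZMod 2 × ZMod 2)) = 0 from by decide,
    show Multiset.count vB ({vB} : Multiset (ZMod 2 × ZMod 2)) = 1 from by decide,
    show Multiset.count vB ({vC} : Multiset (ZMod 2 × ZMod 2)) = 0 from by decide]
  ring
lemma count_e4_C (w x y z : ℕ) : (e4 w x y z).count vC = z := by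
  rw [count_e4,
    show Multiset.count vC ({0} : Multiset (ZMod 2 × ZMod 2)) = 0 from by decide,
    show Multiset.count vC ({vA} : Multiset (ZMod 2 × ZMod 2)) = 0 from by decide,
    show Multiset.count vC ({vB} : Multiset (ZMod 2 × ZMod 2)) = 0 from by decide,
    show Multiset.count vC ({vC} : Multiset (ZMod 2 × ZMod 2)) = 1 from by decide]
  ring

lemma e4_repr (s : Multiset (ZMod 2 × ZMod 2)) :
    s = e4 (s.count 0) (s.count vA) (s.count vB) (s.count vC) := by
  ext a
  rcases V_cases a with rfl | rfl | rfl | rfl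
  · rw [count_e4_0]
  · rw [count_e4_A]
  · rw [count_e4_B]
  · rw [count_e4_C]

lemma sum_e4 (w x y z : ℕ) :
    (e4 w x y z).sum = ((x : ZMod 2) + (z : ZMod 2), (y : ZMod 2) + (z : ZMod 2)) := by
  have h0 : ({(0 : ZMod 2 × ZMod 2)} : Multiset (ZMod 2 × ZMod 2)).sum = 0 := by decide
  have hA : ({vA} : Multiset (ZMod 2 × ZMod 2)).sum = vA := by decide
  have hB : ({vB} : Multiset (ZMod 2 × ZMod 2)).sum = vB := by decide
  have hC : ({vC} : Multiset (ZMod 2 × ZMod 2)).sum = vC := by decide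
  rw [e4, Multiset.sum_add, Multiset.sum_add, Multiset.sum_add, Multiset.sum_nsmul,
    Multiset.sum_nsmul, Multiset.sum_nsmul, Multiset.sum_nsmul, h0, hA, hB, hC]
  simp [vA, vB, vC, Prod.ext_iff, nsmul_eq_mul]

lemma mem_ZS4 (w x y z : ℕ) :
    e4 w x y z ∈ ZS (ZMod 2 × ZMod 2) ↔ (x + z) % 2 = 0 ∧ (y + z) % 2 = 0 := by
  show (e4 w x y z).sum = 0 ↔ _
  rw [sum_e4, Prod.ext_iff]
  have h1 : (x : ZMod 2) + z = ((x + z : ℕ) : ZMod 2) := by push_cast; ring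
  have h2 : (y : ZMod 2) + z = ((y + z : ℕ) : ZMod 2) := by push_cast; ring
  rw [show ((0 : ZMod 2 × ZMod 2)).1 = 0 from rfl, show ((0 : ZMod 2 × ZMod 2)).2 = 0 from rfl,
    h1, h2, ZMod.natCast_eq_zero_iff, ZMod.natCast_eq_zero_iff]
  omega

lemma atoms4 (u : Multiset (ZMod 2 × ZMod 2)) :
    IsAtomIn (ZS (ZMod 2 × ZMod 2)) u ↔
      u = {0} ∨ u = ({vA,vA} : Multiset (ZMod 2 × ZMod 2))
        ∨ u = ({vB,vB} : Multiset (ZMod 2 × ZMod 2))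
        ∨ u = ({vC,vC} : Multiset (ZMod 2 × ZMod 2))
        ∨ u = ({vA,vB,vC} : Multiset (ZMod 2 × ZMod 2)) := by
  constructor
  · intro hu
    have hrep := e4_repr u
    have hmem : e4 (u.count 0) (u.count vA) (u.count vB) (u.count vC) ∈ ZS (ZMod 2 × ZMod 2) := by
      rw [← hrep]; exact hu.1
    obtain ⟨hp1, hp2⟩ := (mem_ZS4 _ _ _ _).mp hmem
    by_cases hw : 1 ≤ u.count 0
    · left
      refine eq_of_le_atom hu ?_ (by decide) (by decide)
      rw [Multiset.le_iff_count]
      intro a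
      rcases V_cases a with rfl | rfl | rfl | rfl
      · rw [show Multiset.count (0 : ZMod 2 × ZMod 2) ({0} : Multiset (ZMod 2 × ZMod 2)) = 1 from by decide]; omega
      · rw [show Multiset.count vA ({0} : Multiset (ZMod 2 × ZMod 2)) = 0 from by decide]; omega
      · rw [show Multiset.count vB ({0} : Multiset (ZMod 2 × ZMod 2)) = 0 from by decide]; omega
      · rw [show Multiset.count vC ({0} : Multiset (ZMod 2 × ZMod 2)) = 0 from by decide]; omega
    · by_cases hx : 2 ≤ u.count vA
      · right; left
        refine eq_of_le_atom hu ?_ (by decide) (by decide)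
        rw [Multiset.le_iff_count]
        intro a
        rcases V_cases a with rfl | rfl | rfl | rfl
        · rw [show Multiset.count (0 : ZMod 2 × ZMod 2) ({vA,vA} : Multiset (ZMod 2 × ZMod 2)) = 0 from by decide]; omega
        · rw [show Multiset.count vA ({vA,vA} : Multiset (ZMod 2 × ZMod 2)) = 2 from by decide]; omega
        · rw [show Multiset.count vB ({vA,vA} : Multiset (ZMod 2 × ZMod 2)) = 0 from by decide]; omega
        · rw [show Multiset.count vC ({vA,vA} : Multiset (ZMod 2 × ZMod 2)) = 0 from by decide]; omega
      · by_cases hy : 2 ≤ u.count vB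
        · right; right; left
          refine eq_of_le_atom hu ?_ (by decide) (by decide)
          rw [Multiset.le_iff_count]
          intro a
          rcases V_cases a with rfl | rfl | rfl | rfl
          · rw [show Multiset.count (0 : ZMod 2 × ZMod 2) ({vB,vB} : Multiset (ZMod 2 × ZMod 2)) = 0 from by decide]; omega
          · rw [show Multiset.count vA ({vB,vB} : Multiset (ZMod 2 × ZMod 2)) = 0 from by decide]; omega
          · rw [show Multiset.count vB ({vB,vB} : Multiset (ZMod 2 × ZMod 2)) = 2 from by decide]; omega
          · rw [show Multiset.count vC ({vB,vB} : Multiset (ZMod 2 × ZMod 2)) = 0 from by decide]; omega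
        · by_cases hz : 2 ≤ u.count vC
          · right; right; right; left
            refine eq_of_le_atom hu ?_ (by decide) (by decide)
            rw [Multiset.le_iff_count]
            intro a
            rcases V_cases a with rfl | rfl | rfl | rfl
            · rw [show Multiset.count (0 : ZMod 2 × ZMod 2) ({vC,vC} : Multiset (ZMod 2 × ZMod 2)) = 0 from by decide]; omega
            · rw [show Multiset.count vA ({vC,vC} : Multiset (ZMod 2 × ZMod 2)) = 0 from by decide]; omega
            · rw [show Multiset.count vB ({vC,vC} : Multiset (ZMod 2 × ZMod 2)) = 0 from by decide]; omega
            · rw [show Multiset.count vC ({vC,vC} : Multiset (ZMod 2 × ZMod 2)) = 2 from by decide]; omega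
          · by_cases hone : 1 ≤ u.count vC
            · right; right; right; right
              refine eq_of_le_atom hu ?_ (by decide) (by decide)
              rw [Multiset.le_iff_count]
              intro a
              rcases V_cases a with rfl | rfl | rfl | rfl
              · rw [show Multiset.count (0 : ZMod 2 × ZMod 2) ({vA,vB,vC} : Multiset (ZMod 2 × ZMod 2)) = 0 from by decide]; omega
              · rw [show Multiset.count vA ({vA,vB,vC} : Multiset (ZMod 2 × ZMod 2)) = 1 from by decide]; omega
              · rw [show Multiset.count vB ({vA,vB,vC} : Multiset (ZMod 2 × ZMod 2)) = 1 from by decide]; omega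
              · rw [show Multiset.count vC ({vA,vB,vC} : Multiset (ZMod 2 × ZMod 2)) = 1 from by decide]; omega
            · exfalso
              apply hu.2.1
              rw [hrep, (by omega : u.count 0 = 0), (by omega : u.count vA = 0),
                (by omega : u.count vB = 0), (by omega : u.count vC = 0)]
              simp [e4]
  · rintro (rfl | rfl | rfl | rfl | rfl)
    · exact atom_zero
    · exact atom_small _ (by decide) (by decide) (by decide) (by decide)
    · exact atom_small _ (by decide) (by decide) (by decide) (by decide)
    · exact atom_small _ (by decide) (by decide) (by decide) (by decide)
    · exact atom_small _ (by decide) (by decide) (by decide) (by decide)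

lemma combo_eq4 (p q1 q2 q3 t : ℕ) :
    p • ({0} : Multiset (ZMod 2 × ZMod 2)) + q1 • ({vA,vA} : Multiset (ZMod 2 × ZMod 2))
      + q2 • ({vB,vB} : Multiset (ZMod 2 × ZMod 2)) + q3 • ({vC,vC} : Multiset (ZMod 2 × ZMod 2))
      + t • ({vA,vB,vC} : Multiset (ZMod 2 × ZMod 2))
      = e4 p (2*q1+t) (2*q2+t) (2*q3+t) := by
  ext g
  simp only [Multiset.count_add, Multiset.count_nsmul]
  rcases V_cases g with rfl | rfl | rfl | rfl
  · rw [count_e4_0,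
      show Multiset.count (0 : ZMod 2 × ZMod 2) ({0} : Multiset (ZMod 2 × ZMod 2)) = 1 from by decide,
      show Multiset.count (0 : ZMod 2 × ZMod 2) ({vA,vA} : Multiset (ZMod 2 × ZMod 2)) = 0 from by decide,
      show Multiset.count (0 : ZMod 2 × ZMod 2) ({vB,vB} : Multiset (ZMod 2 × ZMod 2)) = 0 from by decide,
      show Multiset.count (0 : ZMod 2 × ZMod 2) ({vC,vC} : Multiset (ZMod 2 × ZMod 2)) = 0 from by decide,
      show Multiset.count (0 : ZMod 2 × ZMod 2) ({vA,vB,vC} : Multiset (ZMod 2 × ZMod 2)) = 0 from by decide]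
    ring
  · rw [count_e4_A,
      show Multiset.count vA ({0} : Multiset (ZMod 2 × ZMod 2)) = 0 from by decide,
      show Multiset.count vA ({vA,vA} : Multiset (ZMod 2 × ZMod 2)) = 2 from by decide,
      show Multiset.count vA ({vB,vB} : Multiset (ZMod 2 × ZMod 2)) = 0 from by decide,
      show Multiset.count vA ({vC,vC} : Multiset (ZMod 2 × ZMod 2)) = 0 from by decide,
      show Multiset.count vA ({vA,vB,vC} : Multiset (ZMod 2 × ZMod 2)) = 1 from by decide]
    ring
  · rw [count_e4_B,
      show Multiset.count vB ({0} : Multiset (ZMod 2 × ZMod 2)) = 0 from by decide,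
      show Multiset.count vB ({vA,vA} : Multiset (ZMod 2 × ZMod 2)) = 0 from by decide,
      show Multiset.count vB ({vB,vB} : Multiset (ZMod 2 × ZMod 2)) = 2 from by decide,
      show Multiset.count vB ({vC,vC} : Multiset (ZMod 2 × ZMod 2)) = 0 from by decide,
      show Multiset.count vB ({vA,vB,vC} : Multiset (ZMod 2 × ZMod 2)) = 1 from by decide]
    ring
  · rw [count_e4_C,
      show Multiset.count vC ({0} : Multiset (ZMod 2 × ZMod 2)) = 0 from by decide,
      show Multiset.count vC ({vA,vA} : Multiset (ZMod 2 × ZMod 2)) = 0 from by decide,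
      show Multiset.count vC ({vB,vB} : Multiset (ZMod 2 × ZMod 2)) = 0 from by decide,
      show Multiset.count vC ({vC,vC} : Multiset (ZMod 2 × ZMod 2)) = 2 from by decide,
      show Multiset.count vC ({vA,vB,vC} : Multiset (ZMod 2 × ZMod 2)) = 1 from by decide]
    ring

lemma list_sum_decomp4 (l : List (Multiset (ZMod 2 × ZMod 2)))
    (h : ∀ x ∈ l, x = {0} ∨ x = ({vA,vA} : Multiset (ZMod 2 × ZMod 2))
        ∨ x = ({vB,vB} : Multiset (ZMod 2 × ZMod 2))
        ∨ x = ({vC,vC} : Multiset (ZMod 2 × ZMod 2))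
        ∨ x = ({vA,vB,vC} : Multiset (ZMod 2 × ZMod 2))) :
    ∃ p q1 q2 q3 t : ℕ, l.length = p+q1+q2+q3+t ∧
      l.sum = p • ({0} : Multiset (ZMod 2 × ZMod 2)) + q1 • ({vA,vA} : Multiset (ZMod 2 × ZMod 2))
        + q2 • ({vB,vB} : Multiset (ZMod 2 × ZMod 2)) + q3 • ({vC,vC} : Multiset (ZMod 2 × ZMod 2))
        + t • ({vA,vB,vC} : Multiset (ZMod 2 × ZMod 2)) := by
  induction l with
  | nil => exact ⟨0,0,0,0,0, by simp, by simp⟩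
  | cons head tail ih =>
    obtain ⟨p,q1,q2,q3,t,hlen,hsum⟩ := ih (fun x hx => h x (List.mem_cons_of_mem _ hx))
    rcases h head List.mem_cons_self with rfl | rfl | rfl | rfl | rfl
    · exact ⟨p+1,q1,q2,q3,t, by simp [hlen]; omega,
        by rw [List.sum_cons, hsum, succ_nsmul]; abel⟩
    · exact ⟨p,q1+1,q2,q3,t, by simp [hlen]; omega,
        by rw [List.sum_cons, hsum, succ_nsmul]; abel⟩
    · exact ⟨p,q1,q2+1,q3,t, by simp [hlen]; omega,
        by rw [List.sum_cons, hsum, succ_nsmul]; abel⟩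
    · exact ⟨p,q1,q2,q3+1,t, by simp [hlen]; omega,
        by rw [List.sum_cons, hsum, succ_nsmul]; abel⟩
    · exact ⟨p,q1,q2,q3,t+1, by simp [hlen]; omega,
        by rw [List.sum_cons, hsum, succ_nsmul]; abel⟩

lemma exists_list4 (p q1 q2 q3 t : ℕ) :
    ∃ l : List (Multiset (ZMod 2 × ZMod 2)), l.length = p+q1+q2+q3+t ∧
      (∀ x ∈ l, x = {0} ∨ x = ({vA,vA} : Multiset (ZMod 2 × ZMod 2))
        ∨ x = ({vB,vB} : Multiset (ZMod 2 × ZMod 2))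
        ∨ x = ({vC,vC} : Multiset (ZMod 2 × ZMod 2))
        ∨ x = ({vA,vB,vC} : Multiset (ZMod 2 × ZMod 2))) ∧
      l.sum = p • ({0} : Multiset (ZMod 2 × ZMod 2)) + q1 • ({vA,vA} : Multiset (ZMod 2 × ZMod 2))
        + q2 • ({vB,vB} : Multiset (ZMod 2 × ZMod 2)) + q3 • ({vC,vC} : Multiset (ZMod 2 × ZMod 2))
        + t • ({vA,vB,vC} : Multiset (ZMod 2 × ZMod 2)) := by
  refine ⟨List.replicate p {0} ++ List.replicate q1 {vA,vA} ++ List.replicate q2 {vB,vB}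
    ++ List.replicate q3 {vC,vC} ++ List.replicate t {vA,vB,vC}, by simp; omega, ?_,
    by simp [List.sum_append, List.sum_replicate, add_assoc]⟩
  intro m hm
  simp only [List.mem_append, List.mem_replicate] at hm
  rcases hm with (((⟨_, rfl⟩ | ⟨_, rfl⟩) | ⟨_, rfl⟩) | ⟨_, rfl⟩) | ⟨_, rfl⟩
  · exact Or.inl rfl
  · exact Or.inr (Or.inl rfl)
  · exact Or.inr (Or.inr (Or.inl rfl))
  · exact Or.inr (Or.inr (Or.inr (Or.inl rfl)))
  · exact Or.inr (Or.inr (Or.inr (Or.inr rfl)))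

lemma lengths4 (w x y z : ℕ) :
    lengthsIn (ZS (ZMod 2 × ZMod 2)) (e4 w x y z) =
      {k | ∃ p q1 q2 q3 t : ℕ, k = p+q1+q2+q3+t ∧ w = p ∧ x = 2*q1+t ∧ y = 2*q2+t ∧ z = 2*q3+t} := by
  ext k
  constructor
  · rintro ⟨l, hlen, hat, hsum⟩
    obtain ⟨p,q1,q2,q3,t,hl,hs⟩ := list_sum_decomp4 l (fun m hm => (atoms4 m).mp (hat m hm))
    rw [combo_eq4] at hs
    have he : e4 p (2*q1+t) (2*q2+t) (2*q3+t) = e4 w x y z := hs ▸ hsum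
    have h0 := congrArg (Multiset.count 0) he
    have hA := congrArg (Multiset.count vA) he
    have hB := congrArg (Multiset.count vB) he
    have hC := congrArg (Multiset.count vC) he
    rw [count_e4_0, count_e4_0] at h0
    rw [count_e4_A, count_e4_A] at hA
    rw [count_e4_B, count_e4_B] at hB
    rw [count_e4_C, count_e4_C] at hC
    exact ⟨p,q1,q2,q3,t, by omega, h0.symm, hA.symm, hB.symm, hC.symm⟩
  · rintro ⟨p,q1,q2,q3,t, hk, hw, hx, hy, hz⟩
    obtain ⟨l, h1, h2, h3⟩ := exists_list4 p q1 q2 q3 t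
    refine ⟨l, by omega, fun m hm => (atoms4 m).mpr (h2 m hm), ?_⟩
    rw [h3, combo_eq4, ← hw, ← hx, ← hy, ← hz]

lemma interval4 (w x y z : ℕ) (h1 : (x + z) % 2 = 0) (h2 : (y + z) % 2 = 0) :
    {k | ∃ p q1 q2 q3 t : ℕ, k = p+q1+q2+q3+t ∧ w = p ∧ x = 2*q1+t ∧ y = 2*q2+t ∧ z = 2*q3+t}
      = Set.Icc (w + (x + y + z - min x (min y z))/2) (w + (x + y + z - x % 2)/2) := by
  ext k
  simp only [Set.mem_setOf_eq, Set.mem_Icc]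
  constructor
  · rintro ⟨p,q1,q2,q3,t, rfl, rfl, rfl, rfl, rfl⟩
    constructor <;> omega
  · rintro ⟨hlo, hhi⟩
    exact ⟨w, (k-w) - (y+z)/2, (k-w) - (x+z)/2, (k-w) - (x+y)/2, x+y+z - 2*(k-w),
      by omega, rfl, by omega, by omega, by omega⟩

lemma fam4 :
    {L : Set ℕ | ∃ s ∈ ZS (ZMod 2 × ZMod 2), L = lengthsIn (ZS (ZMod 2 × ZMod 2)) s} =
      {L : Set ℕ | ∃ y k : ℕ, L = Set.Icc (y + 2 * k) (y + 3 * k)} := by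
  ext L
  simp only [Set.mem_setOf_eq]
  constructor
  · rintro ⟨s, hs, rfl⟩
    obtain ⟨w, x, y, z, hp1, hp2, rfl⟩ :
        ∃ w x y z : ℕ, (x + z) % 2 = 0 ∧ (y + z) % 2 = 0 ∧ s = e4 w x y z := by
      refine ⟨s.count 0, s.count vA, s.count vB, s.count vC, ?_, ?_, e4_repr s⟩
      · exact ((mem_ZS4 _ _ _ _).mp (by rw [← e4_repr s]; exact hs)).1
      · exact ((mem_ZS4 _ _ _ _).mp (by rw [← e4_repr s]; exact hs)).2
    rw [lengths4, interval4 w x y z hp1 hp2]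
    refine ⟨w + (x + y + z - min x (min y z))/2 - 2 * ((min x (min y z) - x % 2)/2),
      (min x (min y z) - x % 2)/2, ?_⟩
    have e1 : w + (x + y + z - min x (min y z))/2
        = w + (x + y + z - min x (min y z))/2 - 2 * ((min x (min y z) - x % 2)/2)
          + 2 * ((min x (min y z) - x % 2)/2) := by omega
    have e2 : w + (x + y + z - x % 2)/2
        = w + (x + y + z - min x (min y z))/2 - 2 * ((min x (min y z) - x % 2)/2)
          + 3 * ((min x (min y z) - x % 2)/2) := by omega
    rw [← e1, ← e2]
  · rintro ⟨y, k, rfl⟩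
    have hm1 : (2*k + 2*k) % 2 = 0 := by omega
    refine ⟨e4 y (2*k) (2*k) (2*k), (mem_ZS4 y (2*k) (2*k) (2*k)).mpr ⟨hm1, hm1⟩, ?_⟩
    rw [lengths4, interval4 y (2*k) (2*k) (2*k) hm1 hm1]
    have e1 : y + (2*k + 2*k + 2*k - min (2*k) (min (2*k) (2*k)))/2 = y + 2 * k := by omega
    have e2 : y + (2*k + 2*k + 2*k - (2*k) % 2)/2 = y + 3 * k := by omega
    rw [e1, e2]

theorem stmt19 :
    {L : Set ℕ | ∃ s ∈ ZS (ZMod 3), L = lengthsIn (ZS (ZMod 3)) s} =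
      {L : Set ℕ | ∃ s ∈ ZS (ZMod 2 × ZMod 2), L = lengthsIn (ZS (ZMod 2 × ZMod 2)) s} ∧
    {L : Set ℕ | ∃ s ∈ ZS (ZMod 3), L = lengthsIn (ZS (ZMod 3)) s} =
      {L : Set ℕ | ∃ y k : ℕ, L = Set.Icc (y + 2 * k) (y + 3 * k)} := by
  exact ⟨fam3.trans fam4.symm, fam3⟩
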